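/- Let x ∈ ℂⁿ be s-sparse with T = supp(x), let X ∈ ℂ^{n×n}, m > 0, and let A₁,…,A_l, m₁,…,m_l, v_i, q_i be as in the golfing scheme (v₀ = 0, q_i = sgn(x) − P_T v_i, v_i = (m/m_i) A_i* A_i X P_T q_{i−1} + v_{i−1}). Suppose that for every 1 ≤ i ≤ l the conditions ‖P_T(I − (m/m_i) A_i* A_i X) P_T q_{i−1}‖₂ ≤ c_i ‖q_{i−1}‖₂ and ‖(m/m_i) P_{T^c} A_i* A_i X P_T q_{i−1}‖_∞ ≤ t_i ‖q_{i−1}‖₂ hold. Then ‖q_l‖₂ ≤ √s · ∏_{i=1}^{l} c_i and ‖(v_l)_{T^c}‖_∞ ≤ √s · ( t₁ + Σ_{i=2}^{l} t_i ∏_{j=1}^{i−1} c_j ). -/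
import Mathlib


open MeasureTheory Matrix Finset ComplexConjugate
open scoped BigOperators Matrix ComplexOrder

noncomputable section

/-- The ℓ₂ (Euclidean) norm of a vector in ℂⁿ. -/
def l2norm {n : ℕ} (v : Fin n → ℂ) : ℝ := Real.sqrt (∑ i, ‖v i‖ ^ 2)

/-- The ℓ₁ norm of a vector in ℂⁿ. -/
def l1norm {n : ℕ} (v : Fin n → ℂ) : ℝ := ∑ i, ‖v i‖

/-- The ℓ∞ norm (maximal absolute entry) of a vector in ℂⁿ. -/
def linfNorm {n : ℕ} (v : Fin n → ℂ) : ℝ := ⨆ i, ‖v i‖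

/-- The sparsity ‖v‖₀ of a vector: the cardinality of its support. -/
def sparsity {n : ℕ} (v : Fin n → ℂ) : ℕ := (Finset.univ.filter fun i => v i ≠ 0).card

/-- Largest s-sparse eigenvalue λ_max(s, M) = sup over s-sparse v ≠ 0 of ‖Mv‖₂/‖v‖₂. -/
def sparseMax {n : ℕ} (s : ℕ) (M : Matrix (Fin n) (Fin n) ℂ) : ℝ :=
  ⨆ v : {v : Fin n → ℂ // v ≠ 0 ∧ sparsity v ≤ s}, l2norm (M.mulVec v.1) / l2norm v.1

/-- Smallest s-sparse eigenvalue λ_min(s, M). -/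
def sparseMin {n : ℕ} (s : ℕ) (M : Matrix (Fin n) (Fin n) ℂ) : ℝ :=
  ⨅ v : {v : Fin n → ℂ // v ≠ 0 ∧ sparsity v ≤ s}, l2norm (M.mulVec v.1) / l2norm v.1

/-- s-sparse condition number cond(s, M) = λ_max(s,M)/λ_min(s,M). -/
def sparseCond {n : ℕ} (s : ℕ) (M : Matrix (Fin n) (Fin n) ℂ) : ℝ :=
  sparseMax s M / sparseMin s M

/-- Operator norm (largest singular value) of a square matrix. -/
def opNorm {n : ℕ} (M : Matrix (Fin n) (Fin n) ℂ) : ℝ :=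
  ⨆ v : {v : Fin n → ℂ // v ≠ 0}, l2norm (M.mulVec v.1) / l2norm v.1

/-- The rank-one matrix a a*. -/
def outer {n : ℕ} (a : Fin n → ℂ) : Matrix (Fin n) (Fin n) ℂ :=
  Matrix.of fun i j => a i * conj (a j)

/-- The covariance matrix E[a a*] of the distribution F. -/
def covMatrix {n : ℕ} (F : Measure (Fin n → ℂ)) : Matrix (Fin n) (Fin n) ℂ :=
  Matrix.of fun i j => ∫ a, a i * conj (a j) ∂F

/-- The sampling matrix A = (1/√m) Σᵢ eᵢ aᵢ*. -/
def samplingMatrix {m n : ℕ} (a : Fin m → Fin n → ℂ) : Matrix (Fin m) (Fin n) ℂ :=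
  Matrix.of fun k j => ((Real.sqrt m : ℂ))⁻¹ * conj (a k j)

/-- Orthogonal projector onto vectors supported on T. -/
def projT {n : ℕ} (T : Finset (Fin n)) : Matrix (Fin n) (Fin n) ℂ :=
  Matrix.of fun i j => if i = j ∧ i ∈ T then 1 else 0

/-- The sign vector sgn(x): xᵢ/|xᵢ| on supp(x) and 0 elsewhere. -/
def sgnVec {n : ℕ} (x : Fin n → ℂ) : Fin n → ℂ :=
  fun i => if x i = 0 then 0 else x i / (‖x i‖ : ℂ)

/-- t is an almost sure bound for both incoherence quantities
    max_i |⟨a,eᵢ⟩|² and max_i |⟨a, E[aa*]⁻¹ eᵢ⟩|². -/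
def IncohBound {n : ℕ} (F : Measure (Fin n → ℂ)) (t : ℝ) : Prop :=
  ∀ᵐ a ∂F, ∀ i, ‖a i‖ ^ 2 ≤ t ∧ ‖∑ j, conj (a j) * (covMatrix F)⁻¹ j i‖ ^ 2 ≤ t

/-- μ is the incoherence parameter: the smallest almost sure incoherence bound. -/
def IsIncoherenceParam {n : ℕ} (F : Measure (Fin n → ℂ)) (μ : ℝ) : Prop :=
  IsLeast {t | IncohBound F t} μ

/-- x is the unique minimizer of the ℓ₁ norm among solutions of A x̄ = A x. -/
def UniqueL1Min {m n : ℕ} (A : Matrix (Fin m) (Fin n) ℂ) (x : Fin n → ℂ) : Prop :=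
  ∀ y : Fin n → ℂ, A.mulVec y = A.mulVec x → y ≠ x → l1norm x < l1norm y

section Helpers

variable {n : ℕ}

lemma projT_mulVec (T : Finset (Fin n)) (w : Fin n → ℂ) (i : Fin n) :
    (projT T).mulVec w i = if i ∈ T then w i else 0 := by
  simp only [projT, Matrix.mulVec, dotProduct, Matrix.of_apply]
  rw [Finset.sum_congr rfl (fun j _ => by
    rw [show (if i = j ∧ i ∈ T then (1:ℂ) else 0) * w j
        = if j = i then (if i ∈ T then w j else 0) else 0 by
      by_cases h1 : i = j <;> by_cases h2 : i ∈ T <;> simp [h1, h2, eq_comm]])]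
  simp

lemma projT_idem (T : Finset (Fin n)) (w : Fin n → ℂ) :
    (projT T).mulVec ((projT T).mulVec w) = (projT T).mulVec w := by
  funext i
  simp only [projT_mulVec]
  by_cases h : i ∈ T <;> simp [h]

lemma projT_sgn (x : Fin n → ℂ) :
    (projT (Finset.univ.filter fun i => x i ≠ 0)).mulVec (sgnVec x) = sgnVec x := by
  funext i
  rw [projT_mulVec]
  by_cases h : x i = 0 <;> simp [sgnVec, h]

lemma l2norm_sgn_le {s : ℕ} (x : Fin n → ℂ) (hx : sparsity x ≤ s) :
    l2norm (sgnVec x) ≤ Real.sqrt s := by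
  rw [l2norm]
  apply Real.sqrt_le_sqrt
  have : ∀ i, ‖sgnVec x i‖ ^ 2 = if x i ≠ 0 then (1:ℝ) else 0 := by
    intro i
    by_cases h : x i = 0
    · simp [sgnVec, h]
    · have hn : ‖x i‖ ≠ 0 := by simpa using h
      simp only [sgnVec, if_neg h, if_pos h]
      rw [norm_div, Complex.norm_real, Real.norm_eq_abs, abs_norm, div_self hn,
        one_pow]
  rw [Finset.sum_congr rfl (fun i _ => this i), Finset.sum_ite, Finset.sum_const,
    Finset.sum_const]
  simp only [nsmul_eq_mul, mul_one, mul_zero, add_zero]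
  exact_mod_cast hx

lemma l2norm_nonneg (v : Fin n → ℂ) : 0 ≤ l2norm v := Real.sqrt_nonneg _

lemma linfNorm_le {v : Fin n → ℂ} {r : ℝ} (hr : 0 ≤ r) (h : ∀ i, ‖v i‖ ≤ r) :
    linfNorm v ≤ r := by
  cases isEmpty_or_nonempty (Fin n) with
  | inl he => rw [linfNorm, Real.iSup_of_isEmpty]; exact hr
  | inr hne => exact ciSup_le h

lemma le_linfNorm (v : Fin n → ℂ) (i : Fin n) : ‖v i‖ ≤ linfNorm v :=
  le_ciSup (f := fun i => ‖v i‖) (Set.Finite.bddAbove (Set.finite_range _)) i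

lemma linfNorm_nonneg (v : Fin n → ℂ) : 0 ≤ linfNorm v := by
  cases isEmpty_or_nonempty (Fin n) with
  | inl he => rw [linfNorm, Real.iSup_of_isEmpty]
  | inr hne => exact le_trans (norm_nonneg _) (le_linfNorm v hne.some)

lemma linfNorm_add_le (a b : Fin n → ℂ) :
    linfNorm (a + b) ≤ linfNorm a + linfNorm b := by
  refine linfNorm_le (add_nonneg (linfNorm_nonneg a) (linfNorm_nonneg b)) fun i => ?_
  exact le_trans (norm_add_le _ _) (add_le_add (le_linfNorm a i) (le_linfNorm b i))

end Helpers

/-- Golfing scheme estimates: if each step satisfies the two tail conditions with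
parameters c_i and t_i, then ‖q_l‖₂ ≤ √s ∏ c_i and
‖(v_l)_{T^c}‖_∞ ≤ √s (t₁ + Σ_{i≥2} t_i ∏_{j<i} c_j). -/
theorem statement15 {n s : ℕ} (x : Fin n → ℂ) (hx : sparsity x ≤ s)
    (T : Finset (Fin n)) (hT : T = Finset.univ.filter fun i => x i ≠ 0)
    (X : Matrix (Fin n) (Fin n) ℂ)
    (l : ℕ) (hl : 0 < l)
    (md : Fin l → ℕ) (A : (i : Fin l) → Matrix (Fin (md i)) (Fin n) ℂ)
    (m : ℝ) (hm : 0 < m) (mi : Fin l → ℝ)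
    (v : ℕ → Fin n → ℂ) (q : ℕ → Fin n → ℂ)
    (hv0 : v 0 = 0)
    (hq : ∀ i, q i = sgnVec x - (projT T).mulVec (v i))
    (hv : ∀ (i : ℕ) (h : i < l),
      v (i + 1) = ((m / mi ⟨i, h⟩ : ℝ) : ℂ) •
          ((A ⟨i, h⟩)ᴴ * A ⟨i, h⟩ * X).mulVec ((projT T).mulVec (sgnVec x - v i)) + v i)
    (c t : Fin l → ℝ) (hc : ∀ i, 0 ≤ c i) (ht : ∀ i, 0 ≤ t i)
    (hcond1 : ∀ i : Fin l,
      l2norm ((projT T * (1 - ((m / mi i : ℝ) : ℂ) • ((A i)ᴴ * A i * X)) *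
          projT T).mulVec (q i.1)) ≤ c i * l2norm (q i.1))
    (hcond2 : ∀ i : Fin l,
      linfNorm ((((m / mi i : ℝ) : ℂ) •
          (projT Tᶜ * ((A i)ᴴ * A i * X) * projT T)).mulVec (q i.1)) ≤
        t i * l2norm (q i.1)) :
    l2norm (q l) ≤ Real.sqrt s * (∏ i : Fin l, c i) ∧
    linfNorm ((projT Tᶜ).mulVec (v l)) ≤
      Real.sqrt s * (∑ i : Fin l, t i *
        ∏ j : Fin l, if (j : ℕ) < (i : ℕ) then c j else 1) := by
  -- Basic facts about the projector and sign vector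
  have hsgn : (projT T).mulVec (sgnVec x) = sgnVec x := by
    rw [hT]; exact projT_sgn x
  have hqP : ∀ i, (projT T).mulVec (q i) = q i := by
    intro i
    rw [hq i, Matrix.mulVec_sub, hsgn, projT_idem]
  have hPq : ∀ i, (projT T).mulVec (sgnVec x - v i) = q i := by
    intro i
    rw [Matrix.mulVec_sub, hsgn, ← hq i]
  have hva : ∀ (k : ℕ) (h : k < l),
      v (k + 1) = ((m / mi ⟨k, h⟩ : ℝ) : ℂ) •
        ((A ⟨k, h⟩)ᴴ * A ⟨k, h⟩ * X).mulVec (q k) + v k := by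
    intro k h
    rw [hv k h, hPq k]
  have hrec : ∀ (k : ℕ) (h : k < l),
      q (k + 1) = (projT T * (1 - ((m / mi ⟨k, h⟩ : ℝ) : ℂ) •
        ((A ⟨k, h⟩)ᴴ * A ⟨k, h⟩ * X)) * projT T).mulVec (q k) := by
    intro k h
    set σ : ℂ := ((m / mi ⟨k, h⟩ : ℝ) : ℂ) with hσ
    set B : Matrix (Fin n) (Fin n) ℂ := (A ⟨k, h⟩)ᴴ * A ⟨k, h⟩ * X with hB
    have hR : (projT T * (1 - σ • B) * projT T).mulVec (q k)
        = q k - σ • (projT T).mulVec (B.mulVec (q k)) := by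
      rw [← Matrix.mulVec_mulVec, hqP k, ← Matrix.mulVec_mulVec, Matrix.sub_mulVec,
        Matrix.one_mulVec, Matrix.smul_mulVec, Matrix.mulVec_sub, hqP k,
        Matrix.mulVec_smul]
    rw [hR, hq (k + 1), hva k h, Matrix.mulVec_add, Matrix.mulVec_smul, hq k]
    rw [sub_add_eq_sub_sub, sub_right_comm]
  have hrec2 : ∀ (k : ℕ) (h : k < l),
      (projT Tᶜ).mulVec (v (k + 1)) =
        ((((m / mi ⟨k, h⟩ : ℝ) : ℂ)) •
          (projT Tᶜ * ((A ⟨k, h⟩)ᴴ * A ⟨k, h⟩ * X) * projT T)).mulVec (q k) +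
        (projT Tᶜ).mulVec (v k) := by
    intro k h
    simp only [hva k h, Matrix.mulVec_add, Matrix.mulVec_smul, Matrix.smul_mulVec,
      ← Matrix.mulVec_mulVec, hqP]
  -- products
  have hprodpos : ∀ k : ℕ, 0 ≤ ∏ j : Fin l, (if (j : ℕ) < k then c j else 1) := by
    intro k
    exact Finset.prod_nonneg fun j _ => by by_cases h : (j:ℕ) < k <;> simp [h, hc j]
  have hprod : ∀ (k : ℕ) (h : k < l),
      (∏ j : Fin l, (if (j : ℕ) < k + 1 then c j else 1)) =
        c ⟨k, h⟩ * ∏ j : Fin l, (if (j : ℕ) < k then c j else 1) := by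
    intro k h
    rw [← Finset.mul_prod_erase Finset.univ _ (Finset.mem_univ (⟨k, h⟩ : Fin l)),
      ← Finset.mul_prod_erase Finset.univ (fun j : Fin l => if (j : ℕ) < k then c j else 1)
        (Finset.mem_univ (⟨k, h⟩ : Fin l))]
    simp only [if_pos (Nat.lt_succ_self k), if_neg (lt_irrefl k), one_mul]
    congr 1
    refine Finset.prod_congr rfl fun j hj => ?_
    have hne : (j : ℕ) ≠ k := by
      intro hc'
      exact (Finset.mem_erase.mp hj).1 (Fin.ext hc')
    have : ((j : ℕ) < k + 1) ↔ ((j : ℕ) < k) := by omega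
    simp [this]
  -- first key induction
  have key1 : ∀ k, k ≤ l →
      l2norm (q k) ≤ Real.sqrt s * ∏ j : Fin l, (if (j : ℕ) < k then c j else 1) := by
    intro k
    induction k with
    | zero =>
      intro _
      simp only [Nat.not_lt_zero, if_false, Finset.prod_const_one, mul_one]
      rw [hq 0, hv0, Matrix.mulVec_zero, sub_zero]
      exact l2norm_sgn_le x hx
    | succ k ih =>
      intro hk
      have hkl : k < l := hk
      have h1 : l2norm (q (k + 1)) ≤ c ⟨k, hkl⟩ * l2norm (q k) := by
        rw [hrec k hkl]; exact hcond1 ⟨k, hkl⟩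
      calc l2norm (q (k + 1)) ≤ c ⟨k, hkl⟩ * l2norm (q k) := h1
        _ ≤ c ⟨k, hkl⟩ * (Real.sqrt s * ∏ j : Fin l, (if (j : ℕ) < k then c j else 1)) :=
            mul_le_mul_of_nonneg_left (ih hkl.le) (hc _)
        _ = Real.sqrt s * ∏ j : Fin l, (if (j : ℕ) < k + 1 then c j else 1) := by
            rw [hprod k hkl]; ring
  -- second key induction
  have key2 : ∀ k, k ≤ l →
      linfNorm ((projT Tᶜ).mulVec (v k)) ≤
        ∑ i : Fin l, (if (i : ℕ) < k then t i * l2norm (q i.1) else 0) := by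
    intro k
    induction k with
    | zero =>
      intro _
      simp only [Nat.not_lt_zero, if_false, Finset.sum_const_zero]
      rw [hv0, Matrix.mulVec_zero]
      exact linfNorm_le le_rfl fun i => by simp
    | succ k ih =>
      intro hk
      have hkl : k < l := hk
      have hsum : (∑ i : Fin l, (if (i : ℕ) < k + 1 then t i * l2norm (q i.1) else 0)) =
          t ⟨k, hkl⟩ * l2norm (q k) +
            ∑ i : Fin l, (if (i : ℕ) < k then t i * l2norm (q i.1) else 0) := by
        rw [← Finset.add_sum_erase Finset.univ _ (Finset.mem_univ (⟨k, hkl⟩ : Fin l)),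
          ← Finset.add_sum_erase Finset.univ
            (fun i : Fin l => if (i : ℕ) < k then t i * l2norm (q i.1) else 0)
            (Finset.mem_univ (⟨k, hkl⟩ : Fin l))]
        simp only [if_pos (Nat.lt_succ_self k), if_neg (lt_irrefl k), zero_add]
        congr 1
        refine Finset.sum_congr rfl fun j hj => ?_
        have hne : (j : ℕ) ≠ k := by
          intro hc'
          exact (Finset.mem_erase.mp hj).1 (Fin.ext hc')
        have : ((j : ℕ) < k + 1) ↔ ((j : ℕ) < k) := by omega
        simp [this]
      rw [hrec2 k hkl, hsum]
      exact le_trans (linfNorm_add_le _ _) (add_le_add (hcond2 ⟨k, hkl⟩) (ih hkl.le))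
  constructor
  · have := key1 l le_rfl
    calc l2norm (q l) ≤ Real.sqrt s * ∏ j : Fin l, (if (j : ℕ) < l then c j else 1) := this
      _ = Real.sqrt s * ∏ i : Fin l, c i := by
        congr 1
        exact Finset.prod_congr rfl fun j _ => if_pos j.isLt
  · have h2 := key2 l le_rfl
    have h3 : (∑ i : Fin l, (if (i : ℕ) < l then t i * l2norm (q i.1) else 0)) =
        ∑ i : Fin l, t i * l2norm (q i.1) :=
      Finset.sum_congr rfl fun i _ => if_pos i.isLt
    rw [h3] at h2
    refine le_trans h2 ?_
    rw [Finset.mul_sum]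
    refine Finset.sum_le_sum fun i _ => ?_
    calc t i * l2norm (q i.1)
        ≤ t i * (Real.sqrt s * ∏ j : Fin l, (if (j : ℕ) < (i : ℕ) then c j else 1)) :=
          mul_le_mul_of_nonneg_left (key1 i.1 i.isLt.le) (ht i)
      _ = Real.sqrt s * (t i * ∏ j : Fin l, (if (j : ℕ) < (i : ℕ) then c j else 1)) := by
          ring
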